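/- Let ρ be a density matrix on H, T a subspace of self-adjoint operators, M a locally unbiased measurement at ρ, and x ∈ T. Define shifted measurements M∘S_x and M∘S_{−x} by translating outcomes by ±x, and let M_x := (1/2)(M∘S_x + M∘S_{−x}). Then M_x is locally unbiased and its covariance matrix satisfies V(M_x) = V(M) + x⊗x; consequently the set of covariance matrices of locally unbiased measurements is stable under adding rank-one positive symmetric tensors x⊗x. -/

import Mathlib

open MeasureTheory
open scoped ENNReal

noncomputable section

/-- Trace of a continuous linear operator on the finite-dimensional Hilbert
space `EuclideanSpace ℂ (Fin d)`. -/
def clmTrace {d : ℕ}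
    (A : EuclideanSpace ℂ (Fin d) →L[ℂ] EuclideanSpace ℂ (Fin d)) : ℂ :=
  LinearMap.trace ℂ (EuclideanSpace ℂ (Fin d))
    (A : EuclideanSpace ℂ (Fin d) →ₗ[ℂ] EuclideanSpace ℂ (Fin d))

lemma aux_measEmb_inl {α β : Type*} [MeasurableSpace α] [MeasurableSpace β] :
    MeasurableEmbedding (@Sum.inl α β) :=
  ⟨Sum.inl_injective, measurable_inl, fun _ hs => hs.inl_image⟩

lemma aux_measEmb_inr {α β : Type*} [MeasurableSpace α] [MeasurableSpace β] :
    MeasurableEmbedding (@Sum.inr α β) :=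
  ⟨Sum.inr_injective, measurable_inr, fun _ hs => hs.inr_image⟩

lemma aux_half_sum_integral {Ω : Type*} [MeasurableSpace Ω] (ν : Measure Ω)
    {E : Type*} [NormedAddCommGroup E] [NormedSpace ℝ E]
    (g : Ω ⊕ Ω → E)
    (h1 : Integrable (fun w => g (Sum.inl w)) ν)
    (h2 : Integrable (fun w => g (Sum.inr w)) ν) :
    ∫ ω, g ω ∂((1 / 2 : ℝ≥0∞) • (ν.map Sum.inl + ν.map Sum.inr)) =
      (2 : ℝ)⁻¹ • ((∫ w, g (Sum.inl w) ∂ν) + ∫ w, g (Sum.inr w) ∂ν) := by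
  rw [integral_smul_measure,
    integral_add_measure (aux_measEmb_inl.integrable_map_iff.mpr h1)
      (aux_measEmb_inr.integrable_map_iff.mpr h2),
    aux_measEmb_inl.integral_map, aux_measEmb_inr.integral_map]
  norm_num

/-- `A ↦ Re tr (A ∘L B)` as a continuous real-linear functional. -/
def trLeft {d : ℕ} (B : EuclideanSpace ℂ (Fin d) →L[ℂ] EuclideanSpace ℂ (Fin d)) :
    (EuclideanSpace ℂ (Fin d) →L[ℂ] EuclideanSpace ℂ (Fin d)) →L[ℝ] ℝ :=
  LinearMap.toContinuousLinearMap
  { toFun := fun A => (clmTrace (A ∘L B)).re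
    map_add' := by
      intro A₁ A₂
      simp [clmTrace, ContinuousLinearMap.add_comp, map_add]
    map_smul' := by
      intro r A
      simp [clmTrace, ContinuousLinearMap.smul_comp, LinearMap.map_smul_of_tower,
        Complex.smul_re] }

/-- `A ↦ Re tr (B ∘L A)` as a continuous real-linear functional. -/
def trRight {d : ℕ} (B : EuclideanSpace ℂ (Fin d) →L[ℂ] EuclideanSpace ℂ (Fin d)) :
    (EuclideanSpace ℂ (Fin d) →L[ℂ] EuclideanSpace ℂ (Fin d)) →L[ℝ] ℝ :=
  LinearMap.toContinuousLinearMap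
  { toFun := fun A => (clmTrace (B ∘L A)).re
    map_add' := by
      intro A₁ A₂
      simp [clmTrace, ContinuousLinearMap.comp_add, map_add]
    map_smul' := by
      intro r A
      simp [clmTrace, ContinuousLinearMap.comp_smul, LinearMap.map_smul_of_tower,
        Complex.smul_re] }

set_option maxHeartbeats 2000000
set_option synthInstance.maxHeartbeats 400000

/-- Let `ρ` be a density matrix on the finite-dimensional `H`,
`T` a subspace of self-adjoint operators (realized by the embedding `ι`), and
`M` a locally unbiased measurement at `ρ` with outcomes in `T`, encoded as a
POVM density `m` on an outcome space `Ω` with base measure `ν` and outcome map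
`o : Ω → T`.  For `x₀ ∈ T`, the randomized measurement
`M_{x₀} = (1/2)(M ∘ S_{x₀} + M ∘ S_{−x₀})` — encoded on `Ω ⊕ Ω` with base
measure `(1/2)(ν.map inl + ν.map inr)`, density `Sum.elim m m` and outcome map
`Sum.elim (o + x₀) (o − x₀)` — is again a locally unbiased measurement and its
covariance bilinear form satisfies `V(M_{x₀}) = V(M) + x₀ ⊗ x₀`. -/
theorem stmt16 (d : ℕ)
    (ρ : EuclideanSpace ℂ (Fin d) →L[ℂ] EuclideanSpace ℂ (Fin d))
    (hρpos : ρ.IsPositive) (hρtr : clmTrace ρ = 1)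
    (T : Type*) [NormedAddCommGroup T] [NormedSpace ℝ T] [FiniteDimensional ℝ T]
    [MeasurableSpace T] [BorelSpace T]
    (ι : T →L[ℝ] EuclideanSpace ℂ (Fin d) →L[ℂ] EuclideanSpace ℂ (Fin d))
    (hι : Function.Injective ι)
    (hTsa : ∀ x : T, IsSelfAdjoint (ι x))
    {Ω : Type*} [MeasurableSpace Ω] (ν : Measure Ω)
    (m : Ω → EuclideanSpace ℂ (Fin d) →L[ℂ] EuclideanSpace ℂ (Fin d))
    (o : Ω → T) (ho : Measurable o)
    (hm : ∀ ω, (m ω).IsPositive) (hmint : Integrable m ν)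
    (hPOVM : ∫ ω, m ω ∂ν = 1)
    (hmeanint : Integrable (fun ω => (clmTrace (m ω ∘L ρ)).re • o ω) ν)
    (hmean : ∫ ω, (clmTrace (m ω ∘L ρ)).re • o ω ∂ν = 0)
    (hubint : ∀ a : T →ₗ[ℝ] T,
      Integrable (fun ω => (clmTrace (ι (a (o ω)) ∘L m ω)).re) ν)
    (hub : ∀ a : T →ₗ[ℝ] T,
      ∫ ω, (clmTrace (ι (a (o ω)) ∘L m ω)).re ∂ν = LinearMap.trace ℝ T a)
    (hcovint : ∀ f k : T →ₗ[ℝ] ℝ,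
      Integrable (fun ω => (clmTrace (m ω ∘L ρ)).re * (f (o ω) * k (o ω))) ν)
    (x0 : T) :
    -- shifted measurement `M_{x₀}` on `Ω ⊕ Ω`
    (∫ ω, Sum.elim m m ω
        ∂((1 / 2 : ℝ≥0∞) • (ν.map Sum.inl + ν.map Sum.inr)) = 1) ∧
    (∫ ω, (clmTrace (Sum.elim m m ω ∘L ρ)).re •
          Sum.elim (fun w => o w + x0) (fun w => o w - x0) ω
        ∂((1 / 2 : ℝ≥0∞) • (ν.map Sum.inl + ν.map Sum.inr)) = 0) ∧
    (∀ a : T →ₗ[ℝ] T,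
      ∫ ω, (clmTrace
            (ι (a (Sum.elim (fun w => o w + x0) (fun w => o w - x0) ω)) ∘L
              Sum.elim m m ω)).re
        ∂((1 / 2 : ℝ≥0∞) • (ν.map Sum.inl + ν.map Sum.inr)) =
      LinearMap.trace ℝ T a) ∧
    (∀ f k : T →ₗ[ℝ] ℝ,
      ∫ ω, (clmTrace (Sum.elim m m ω ∘L ρ)).re *
          (f (Sum.elim (fun w => o w + x0) (fun w => o w - x0) ω) *
           k (Sum.elim (fun w => o w + x0) (fun w => o w - x0) ω))
        ∂((1 / 2 : ℝ≥0∞) • (ν.map Sum.inl + ν.map Sum.inr)) =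
      (∫ ω, (clmTrace (m ω ∘L ρ)).re * (f (o ω) * k (o ω)) ∂ν) +
        f x0 * k x0) := by

  -- integrability and integral of the "probability density" `w ↦ Re tr (m w ρ)`
  have hcint : Integrable (fun w => (clmTrace (m w ∘L ρ)).re) ν :=
    (trLeft ρ).integrable_comp hmint
  have hone : (trLeft ρ) 1 = 1 := by
    have h1 : ((1 : EuclideanSpace ℂ (Fin d) →L[ℂ] EuclideanSpace ℂ (Fin d)) ∘L ρ) = ρ := by
      rw [ContinuousLinearMap.one_def, ContinuousLinearMap.id_comp]
    simp only [trLeft, LinearMap.coe_toContinuousLinearMap', LinearMap.coe_mk, AddHom.coe_mk]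
    change (clmTrace ((1 : EuclideanSpace ℂ (Fin d) →L[ℂ] EuclideanSpace ℂ (Fin d)) ∘L ρ)).re = 1
    rw [h1, hρtr]
    simp
  have hctr : ∫ w, (clmTrace (m w ∘L ρ)).re ∂ν = 1 := by
    have h := (trLeft ρ).integral_comp_comm hmint
    rw [hPOVM, hone] at h
    exact h
  refine ⟨?_, ?_, ?_, ?_⟩
  · rw [aux_half_sum_integral ν _ hmint hmint]
    simp only [Sum.elim_inl, Sum.elim_inr]
    rw [hPOVM, ← two_smul ℝ (1 : EuclideanSpace ℂ (Fin d) →L[ℂ] EuclideanSpace ℂ (Fin d)),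
      smul_smul]
    norm_num
  · have hx0int : Integrable (fun w => (clmTrace (m w ∘L ρ)).re • x0) ν :=
      hcint.smul_const x0
    have hint1 : Integrable (fun w => (clmTrace (m w ∘L ρ)).re • (o w + x0)) ν := by
      exact (hmeanint.add hx0int).congr (Filter.Eventually.of_forall fun w => by simp [Pi.add_apply, smul_add])
    have hint2 : Integrable (fun w => (clmTrace (m w ∘L ρ)).re • (o w - x0)) ν := by
      exact (hmeanint.sub hx0int).congr (Filter.Eventually.of_forall fun w => by simp [Pi.sub_apply, smul_sub])
    rw [aux_half_sum_integral ν _ hint1 hint2]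
    simp only [Sum.elim_inl, Sum.elim_inr]
    have e1 : ∫ w, (clmTrace (m w ∘L ρ)).re • (o w + x0) ∂ν = x0 := by
      simp_rw [smul_add]
      rw [integral_add hmeanint hx0int, hmean, integral_smul_const, hctr, zero_add, one_smul]
    have e2 : ∫ w, (clmTrace (m w ∘L ρ)).re • (o w - x0) ∂ν = -x0 := by
      simp_rw [smul_sub]
      rw [integral_sub hmeanint hx0int, hmean, integral_smul_const, hctr, zero_sub, one_smul]
    rw [e1, e2]
    simp
  · intro a
    have hax0 : Integrable (fun w => (clmTrace (ι (a x0) ∘L m w)).re) ν :=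
      (trRight (ι (a x0))).integrable_comp hmint
    have iax0 : ∫ w, (clmTrace (ι (a x0) ∘L m w)).re ∂ν = (clmTrace (ι (a x0))).re := by
      have h := (trRight (ι (a x0))).integral_comp_comm hmint
      rw [hPOVM] at h
      have h2 : (trRight (ι (a x0))) 1 = (clmTrace (ι (a x0))).re := by
        have h1 : (ι (a x0) ∘L (1 : EuclideanSpace ℂ (Fin d) →L[ℂ] EuclideanSpace ℂ (Fin d)))
            = ι (a x0) := by
          rw [ContinuousLinearMap.one_def, ContinuousLinearMap.comp_id]
        simp only [trRight, LinearMap.coe_toContinuousLinearMap', LinearMap.coe_mk,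
          AddHom.coe_mk]
        change (clmTrace (ι (a x0) ∘L (1 : EuclideanSpace ℂ (Fin d) →L[ℂ] EuclideanSpace ℂ (Fin d)))).re = (clmTrace (ι (a x0))).re
        rw [h1]
      rw [h2] at h
      exact h
    have heq1 : (fun w => (clmTrace (ι (a (o w + x0)) ∘L m w)).re) =
        fun w => (clmTrace (ι (a (o w)) ∘L m w)).re + (clmTrace (ι (a x0) ∘L m w)).re := by
      funext w
      simp [map_add, clmTrace, ContinuousLinearMap.add_comp]
    have heq2 : (fun w => (clmTrace (ι (a (o w - x0)) ∘L m w)).re) =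
        fun w => (clmTrace (ι (a (o w)) ∘L m w)).re - (clmTrace (ι (a x0) ∘L m w)).re := by
      funext w
      simp [map_sub, clmTrace, ContinuousLinearMap.sub_comp]
    have hint1 : Integrable (fun w => (clmTrace (ι (a (o w + x0)) ∘L m w)).re) ν := by
      rw [heq1]; exact (hubint a).add hax0
    have hint2 : Integrable (fun w => (clmTrace (ι (a (o w - x0)) ∘L m w)).re) ν := by
      rw [heq2]; exact (hubint a).sub hax0
    rw [aux_half_sum_integral ν _ hint1 hint2]
    simp only [Sum.elim_inl, Sum.elim_inr]
    have E1 : ∫ w, (clmTrace (ι (a (o w + x0)) ∘L m w)).re ∂ν =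
        LinearMap.trace ℝ T a + (clmTrace (ι (a x0))).re := by
      rw [heq1, integral_add (hubint a) hax0, hub a, iax0]
    have E2 : ∫ w, (clmTrace (ι (a (o w - x0)) ∘L m w)).re ∂ν =
        LinearMap.trace ℝ T a - (clmTrace (ι (a x0))).re := by
      rw [heq2, integral_sub (hubint a) hax0, hub a, iax0]
    rw [E1, E2, smul_eq_mul]
    ring
  · intro f k
    -- integrability and vanishing of `w ↦ Re tr (m w ρ) * f (o w)` (and same for k)
    have hof : Integrable (fun w => (clmTrace (m w ∘L ρ)).re * f (o w)) ν := by
      have h := (LinearMap.toContinuousLinearMap f).integrable_comp hmeanint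
      simpa [_root_.map_smul, smul_eq_mul] using h
    have hok : Integrable (fun w => (clmTrace (m w ∘L ρ)).re * k (o w)) ν := by
      have h := (LinearMap.toContinuousLinearMap k).integrable_comp hmeanint
      simpa [_root_.map_smul, smul_eq_mul] using h
    have iof : ∫ w, (clmTrace (m w ∘L ρ)).re * f (o w) ∂ν = 0 := by
      have h := (LinearMap.toContinuousLinearMap f).integral_comp_comm hmeanint
      rw [hmean] at h
      simpa [_root_.map_smul, smul_eq_mul] using h
    have iok : ∫ w, (clmTrace (m w ∘L ρ)).re * k (o w) ∂ν = 0 := by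
      have h := (LinearMap.toContinuousLinearMap k).integral_comp_comm hmeanint
      rw [hmean] at h
      simpa [_root_.map_smul, smul_eq_mul] using h
    have heq1 : (fun w => (clmTrace (m w ∘L ρ)).re * (f (o w + x0) * k (o w + x0))) =
        fun w => (clmTrace (m w ∘L ρ)).re * (f (o w) * k (o w)) +
          (k x0 * ((clmTrace (m w ∘L ρ)).re * f (o w)) +
            (f x0 * ((clmTrace (m w ∘L ρ)).re * k (o w)) +
              (f x0 * k x0) * (clmTrace (m w ∘L ρ)).re)) := by
      funext w
      simp only [map_add]
      ring
    have heq2 : (fun w => (clmTrace (m w ∘L ρ)).re * (f (o w - x0) * k (o w - x0))) =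
        fun w => (clmTrace (m w ∘L ρ)).re * (f (o w) * k (o w)) +
          ((-(k x0)) * ((clmTrace (m w ∘L ρ)).re * f (o w)) +
            ((-(f x0)) * ((clmTrace (m w ∘L ρ)).re * k (o w)) +
              (f x0 * k x0) * (clmTrace (m w ∘L ρ)).re)) := by
      funext w
      simp only [map_sub]
      ring
    have h1a : Integrable (fun w => k x0 * ((clmTrace (m w ∘L ρ)).re * f (o w))) ν :=
      hof.const_mul _
    have h1b : Integrable (fun w => f x0 * ((clmTrace (m w ∘L ρ)).re * k (o w))) ν :=
      hok.const_mul _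
    have h1c : Integrable (fun w => (f x0 * k x0) * (clmTrace (m w ∘L ρ)).re) ν :=
      hcint.const_mul _
    have h2a : Integrable (fun w => (-(k x0)) * ((clmTrace (m w ∘L ρ)).re * f (o w))) ν :=
      hof.const_mul _
    have h2b : Integrable (fun w => (-(f x0)) * ((clmTrace (m w ∘L ρ)).re * k (o w))) ν :=
      hok.const_mul _
    have h1bc : Integrable (fun w => f x0 * ((clmTrace (m w ∘L ρ)).re * k (o w)) +
        (f x0 * k x0) * (clmTrace (m w ∘L ρ)).re) ν := h1b.add h1c
    have h2bc : Integrable (fun w => (-(f x0)) * ((clmTrace (m w ∘L ρ)).re * k (o w)) +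
        (f x0 * k x0) * (clmTrace (m w ∘L ρ)).re) ν := h2b.add h1c
    have hrest1 : Integrable (fun w =>
        k x0 * ((clmTrace (m w ∘L ρ)).re * f (o w)) +
          (f x0 * ((clmTrace (m w ∘L ρ)).re * k (o w)) +
            (f x0 * k x0) * (clmTrace (m w ∘L ρ)).re)) ν := h1a.add h1bc
    have hrest2 : Integrable (fun w =>
        (-(k x0)) * ((clmTrace (m w ∘L ρ)).re * f (o w)) +
          ((-(f x0)) * ((clmTrace (m w ∘L ρ)).re * k (o w)) +
            (f x0 * k x0) * (clmTrace (m w ∘L ρ)).re)) ν := h2a.add h2bc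
    have hint1 : Integrable
        (fun w => (clmTrace (m w ∘L ρ)).re * (f (o w + x0) * k (o w + x0))) ν := by
      rw [heq1]; exact (hcovint f k).add hrest1
    have hint2 : Integrable
        (fun w => (clmTrace (m w ∘L ρ)).re * (f (o w - x0) * k (o w - x0))) ν := by
      rw [heq2]; exact (hcovint f k).add hrest2
    rw [aux_half_sum_integral ν _ hint1 hint2]
    simp only [Sum.elim_inl, Sum.elim_inr]
    have E1 : ∫ w, (clmTrace (m w ∘L ρ)).re * (f (o w + x0) * k (o w + x0)) ∂ν =
        (∫ ω, (clmTrace (m ω ∘L ρ)).re * (f (o ω) * k (o ω)) ∂ν) + f x0 * k x0 := by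
      rw [heq1, integral_add (hcovint f k) hrest1, integral_add h1a h1bc,
        integral_add h1b h1c,
        integral_const_mul, integral_const_mul, integral_const_mul, iof, iok, hctr]
      ring
    have E2 : ∫ w, (clmTrace (m w ∘L ρ)).re * (f (o w - x0) * k (o w - x0)) ∂ν =
        (∫ ω, (clmTrace (m ω ∘L ρ)).re * (f (o ω) * k (o ω)) ∂ν) + f x0 * k x0 := by
      rw [heq2, integral_add (hcovint f k) hrest2, integral_add h2a h2bc,
        integral_add h2b h1c,
        integral_const_mul, integral_const_mul, integral_const_mul, iof, iok, hctr]
      ring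
    rw [E1, E2, smul_eq_mul]
    ring

end
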